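/- Assume q > p > 1. Let (u,v) be a positive classical solution of the system u_t − Δu + v^p = 0, v_t − Δv + u^q = 0 on Ω×(0,T). Set d = (q+1)/(p+1), c = 2^{1−p}·min(d, 2^{1−q}), k = c^{−1/(d−1)}, and define F(x,t) = (k+u(x,t))^d + v(x,t). Then at every point of Ω×(0,T) one has ∂_t F − ΔF + c·(k+u)^{d−1}·F^p ≤ k^q, and consequently ∂_t F − ΔF + F^p ≤ k^q; that is, F is a classical subsolution of the equation U_t − ΔU + U^p = k^q on Ω×(0,T). -/

import Mathlib

open MeasureTheory Filter Set Metric Topology ENNReal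

/-- The Laplacian in the space variable: the trace of the second derivative. -/
noncomputable def plap {N : ℕ} (f : EuclideanSpace ℝ (Fin N) → ℝ)
    (x : EuclideanSpace ℝ (Fin N)) : ℝ :=
  ∑ i : Fin N, iteratedFDeriv ℝ 2 f x ![EuclideanSpace.single i 1, EuclideanSpace.single i 1]

/-- The time interval `(0, T)` for `T ∈ (0, ∞]`. -/
def timeIoo (T : ℝ≥0∞) : Set ℝ := {t : ℝ | 0 < t ∧ ENNReal.ofReal t < T}

/-- `(u, v)` is a positive classical solution of the system
`u_t − Δu + v^p = 0`, `v_t − Δv + u^q = 0` on `Ω × (0, T)`. -/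
structure IsPosSol {N : ℕ} (Ω : Set (EuclideanSpace ℝ (Fin N))) (T : ℝ≥0∞) (p q : ℝ)
    (u v : EuclideanSpace ℝ (Fin N) → ℝ → ℝ) : Prop where
  upos : ∀ x ∈ Ω, ∀ t ∈ timeIoo T, 0 < u x t
  vpos : ∀ x ∈ Ω, ∀ t ∈ timeIoo T, 0 < v x t
  ucont : ContinuousOn (fun z : EuclideanSpace ℝ (Fin N) × ℝ => u z.1 z.2) (Ω ×ˢ timeIoo T)
  vcont : ContinuousOn (fun z : EuclideanSpace ℝ (Fin N) × ℝ => v z.1 z.2) (Ω ×ˢ timeIoo T)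
  uxreg : ∀ t ∈ timeIoo T, ContDiffOn ℝ 2 (fun x => u x t) Ω
  vxreg : ∀ t ∈ timeIoo T, ContDiffOn ℝ 2 (fun x => v x t) Ω
  utreg : ∀ x ∈ Ω, ContDiffOn ℝ 1 (fun t => u x t) (timeIoo T)
  vtreg : ∀ x ∈ Ω, ContDiffOn ℝ 1 (fun t => v x t) (timeIoo T)
  ueq : ∀ x ∈ Ω, ∀ t ∈ timeIoo T,
    deriv (fun s => u x s) t - plap (fun y => u y t) x + v x t ^ p = 0
  veq : ∀ x ∈ Ω, ∀ t ∈ timeIoo T,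
    deriv (fun s => v x s) t - plap (fun y => v y t) x + u x t ^ q = 0

/-- from Proposition 3.3: for `q > p > 1`, with `d = (q+1)/(p+1)`,
`c = 2^{1−p} min(d, 2^{1−q})`, `k = c^{−1/(d−1)}` and `F = (k+u)^d + v`, one has
`F_t − ΔF + c (k+u)^{d−1} F^p ≤ k^q` and consequently `F_t − ΔF + F^p ≤ k^q`
pointwise on `Ω × (0,T)`, i.e. `F` is a classical subsolution of `U_t − ΔU + U^p = k^q`. -/

lemma real_two_convex {a b pp : ℝ} (ha : 0 ≤ a) (hb : 0 ≤ b) (hp : 1 ≤ pp) :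
    (a + b) ^ pp ≤ 2 ^ (pp - 1) * (a ^ pp + b ^ pp) := by
  lift a to NNReal using ha
  lift b to NNReal using hb
  have := NNReal.rpow_add_le_mul_rpow_add_rpow a b hp
  exact_mod_cast this

lemma alg_core {p q d c k U V : ℝ} (hp : 1 < p) (hpq : p < q)
    (hd : d = (q + 1) / (p + 1)) (hc : c = 2 ^ (1 - p) * min d (2 ^ (1 - q)))
    (hk : k = c ^ (-(1 / (d - 1)))) (hU : 0 < U) (hV : 0 < V) :
    c * (k + U) ^ (d - 1) * ((k + U) ^ d + V) ^ p
        ≤ d * (k + U) ^ (d - 1) * V ^ p + U ^ q + k ^ q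
    ∧ ((k + U) ^ d + V) ^ p ≤ c * (k + U) ^ (d - 1) * ((k + U) ^ d + V) ^ p := by
  have hp1 : (0:ℝ) < p + 1 := by linarith
  have hd1 : 1 < d := by rw [hd, lt_div_iff₀ hp1]; linarith
  have hd0 : 0 < d := by linarith
  have h2q : (0:ℝ) < 2 ^ (1 - q) := Real.rpow_pos_of_pos two_pos _
  have h2p : (0:ℝ) < 2 ^ (1 - p) := Real.rpow_pos_of_pos two_pos _
  have hc0 : 0 < c := by rw [hc]; exact mul_pos h2p (lt_min hd0 h2q)
  have hk0 : 0 < k := hk ▸ Real.rpow_pos_of_pos hc0 _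
  set w := k + U with hwdef
  have hw0 : 0 < w := by positivity
  have hP2 : (0:ℝ) < 2 ^ (p - 1) := Real.rpow_pos_of_pos two_pos _
  have hQ2 : (0:ℝ) < 2 ^ (q - 1) := Real.rpow_pos_of_pos two_pos _
  have hpp1 : (2:ℝ) ^ (1 - p) * 2 ^ (p - 1) = 1 := by
    rw [← Real.rpow_add two_pos]; norm_num
  have hqq1 : (2:ℝ) ^ (1 - q) * 2 ^ (q - 1) = 1 := by
    rw [← Real.rpow_add two_pos]; norm_num
  have key1 : c * 2 ^ (p - 1) ≤ d := by
    calc c * 2 ^ (p - 1) = (2 ^ (1 - p) * 2 ^ (p - 1)) * min d (2 ^ (1 - q)) := by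
          rw [hc]; ring
      _ = min d (2 ^ (1 - q)) := by rw [hpp1, one_mul]
      _ ≤ d := min_le_left _ _
  have key2 : c * 2 ^ (p - 1) * 2 ^ (q - 1) ≤ 1 := by
    calc c * 2 ^ (p - 1) * 2 ^ (q - 1)
        = (2 ^ (1 - p) * 2 ^ (p - 1)) * (min d (2 ^ (1 - q)) * 2 ^ (q - 1)) := by
          rw [hc]; ring
      _ = min d (2 ^ (1 - q)) * 2 ^ (q - 1) := by rw [hpp1, one_mul]
      _ ≤ 2 ^ (1 - q) * 2 ^ (q - 1) :=
          mul_le_mul_of_nonneg_right (min_le_right _ _) hQ2.le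
      _ = 1 := hqq1
  have keyq : d * (p + 1) = q + 1 := by rw [hd]; field_simp
  set A := w ^ (d - 1) with hA
  have hA0 : 0 < A := Real.rpow_pos_of_pos hw0 _
  have hB0 : 0 < w ^ d := Real.rpow_pos_of_pos hw0 _
  have hVp : 0 < V ^ p := Real.rpow_pos_of_pos hV _
  have h1 : A * (w ^ d) ^ p = w ^ q := by
    rw [hA, ← Real.rpow_mul hw0.le, ← Real.rpow_add hw0]
    congr 1
    linarith [keyq]
  have convex1 : (w ^ d + V) ^ p ≤ 2 ^ (p - 1) * ((w ^ d) ^ p + V ^ p) :=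
    real_two_convex hB0.le hV.le hp.le
  have convex2 : w ^ q ≤ 2 ^ (q - 1) * (k ^ q + U ^ q) :=
    real_two_convex hk0.le hU.le (by linarith)
  have hkq : 0 < k ^ q := Real.rpow_pos_of_pos hk0 _
  have hUq : 0 < U ^ q := Real.rpow_pos_of_pos hU _
  constructor
  · calc c * A * (w ^ d + V) ^ p
        ≤ c * A * (2 ^ (p - 1) * ((w ^ d) ^ p + V ^ p)) :=
          mul_le_mul_of_nonneg_left convex1 (by positivity)
      _ = (c * 2 ^ (p - 1)) * (A * (w ^ d) ^ p) + (c * 2 ^ (p - 1)) * (A * V ^ p) := by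
          ring
      _ = (c * 2 ^ (p - 1)) * w ^ q + (c * 2 ^ (p - 1)) * (A * V ^ p) := by rw [h1]
      _ ≤ (c * 2 ^ (p - 1)) * (2 ^ (q - 1) * (k ^ q + U ^ q)) + d * (A * V ^ p) := by
          refine add_le_add (mul_le_mul_of_nonneg_left convex2 (by positivity)) ?_
          exact mul_le_mul_of_nonneg_right key1 (by positivity)
      _ = (c * 2 ^ (p - 1) * 2 ^ (q - 1)) * (k ^ q + U ^ q) + d * (A * V ^ p) := by ring
      _ ≤ 1 * (k ^ q + U ^ q) + d * (A * V ^ p) :=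
          add_le_add (mul_le_mul_of_nonneg_right key2 (by positivity)) le_rfl
      _ = d * A * V ^ p + U ^ q + k ^ q := by ring
  · have hck : c * k ^ (d - 1) = 1 := by
      have hd1' : d - 1 ≠ 0 := by linarith
      rw [hk, ← Real.rpow_mul hc0.le,
        show -(1 / (d - 1)) * (d - 1) = -1 by field_simp,
        Real.rpow_neg_one]
      exact mul_inv_cancel₀ hc0.ne'
    have hkw : k ^ (d - 1) ≤ A :=
      Real.rpow_le_rpow hk0.le (by linarith) (by linarith)
    have : 1 ≤ c * A := by
      calc (1:ℝ) = c * k ^ (d - 1) := hck.symm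
        _ ≤ c * A := mul_le_mul_of_nonneg_left hkw hc0.le
    nlinarith [Real.rpow_pos_of_pos (show (0:ℝ) < w ^ d + V by positivity) p]

lemma plap_eq_sum {N : ℕ} (f : EuclideanSpace ℝ (Fin N) → ℝ) (x : EuclideanSpace ℝ (Fin N)) :
    plap f x = ∑ i : Fin N,
      fderiv ℝ (fderiv ℝ f) x (EuclideanSpace.single i 1) (EuclideanSpace.single i 1) := by
  unfold plap
  refine Finset.sum_congr rfl fun i _ => ?_
  rw [iteratedFDeriv_two_apply]
  simp

lemma plap_lower {N : ℕ} {Ω : Set (EuclideanSpace ℝ (Fin N))} (hΩ : IsOpen Ω)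
    {f g : EuclideanSpace ℝ (Fin N) → ℝ} {x : EuclideanSpace ℝ (Fin N)} (hx : x ∈ Ω)
    (hf : ContDiffOn ℝ 2 f Ω) (hg : ContDiffOn ℝ 2 g Ω)
    {k d : ℝ} (hd : 1 < d) (hpos : ∀ y ∈ Ω, 0 < k + f y) :
    d * (k + f x) ^ (d - 1) * plap f x + plap g x
      ≤ plap (fun y => (k + f y) ^ d + g y) x := by
  have hmem : ∀ᶠ y in 𝓝 x, y ∈ Ω := hΩ.eventually_mem hx
  have hF1 : ∀ y ∈ Ω, HasFDerivAt (fun z => (k + f z) ^ d + g z)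
      ((d * (k + f y) ^ (d - 1)) • fderiv ℝ f y + fderiv ℝ g y) y := by
    intro y hy
    have hfy : DifferentiableAt ℝ f y :=
      (hf.contDiffAt (hΩ.mem_nhds hy)).differentiableAt two_ne_zero
    have hgy : DifferentiableAt ℝ g y :=
      (hg.contDiffAt (hΩ.mem_nhds hy)).differentiableAt two_ne_zero
    have hinner : HasFDerivAt (fun z => k + f z) (fderiv ℝ f y) y :=
      hfy.hasFDerivAt.const_add k
    have houter : HasDerivAt (fun s : ℝ => s ^ d) (d * (k + f y) ^ (d - 1)) (k + f y) :=
      Real.hasDerivAt_rpow_const (Or.inl (hpos y hy).ne')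
    exact (houter.comp_hasFDerivAt y hinner).add hgy.hasFDerivAt
  have hev : fderiv ℝ (fun z => (k + f z) ^ d + g z) =ᶠ[𝓝 x]
      fun y => (d * (k + f y) ^ (d - 1)) • fderiv ℝ f y + fderiv ℝ g y :=
    hmem.mono fun y hy => (hF1 y hy).fderiv
  have hfx2 : ContDiffAt ℝ 2 f x := hf.contDiffAt (hΩ.mem_nhds hx)
  have hgx2 : ContDiffAt ℝ 2 g x := hg.contDiffAt (hΩ.mem_nhds hx)
  have hdf' : HasFDerivAt (fderiv ℝ f) (fderiv ℝ (fderiv ℝ f) x) x :=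
    ((hfx2.fderiv_right (m := 1) one_add_one_eq_two.le).differentiableAt one_ne_zero).hasFDerivAt
  have hdg' : HasFDerivAt (fderiv ℝ g) (fderiv ℝ (fderiv ℝ g) x) x :=
    ((hgx2.fderiv_right (m := 1) one_add_one_eq_two.le).differentiableAt one_ne_zero).hasFDerivAt
  have hfx1 : DifferentiableAt ℝ f x := hfx2.differentiableAt two_ne_zero
  have hinner : HasFDerivAt (fun z => k + f z) (fderiv ℝ f x) x :=
    hfx1.hasFDerivAt.const_add k
  set w := k + f x with hw
  have hw0 : 0 < w := hpos x hx
  have hcder : HasFDerivAt (fun y => d * (k + f y) ^ (d - 1))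
      ((d * ((d - 1) * w ^ (d - 1 - 1))) • fderiv ℝ f x) x := by
    have houter : HasDerivAt (fun s : ℝ => d * s ^ (d - 1))
        (d * ((d - 1) * w ^ (d - 1 - 1))) w :=
      (Real.hasDerivAt_rpow_const (Or.inl hw0.ne')).const_mul d
    exact houter.comp_hasFDerivAt (f := fun z => k + f z) x hinner
  have hΦ : HasFDerivAt (fun y => (d * (k + f y) ^ (d - 1)) • fderiv ℝ f y + fderiv ℝ g y)
      ((d * w ^ (d - 1)) • fderiv ℝ (fderiv ℝ f) x
        + ((d * ((d - 1) * w ^ (d - 1 - 1))) • fderiv ℝ f x).smulRight (fderiv ℝ f x)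
        + fderiv ℝ (fderiv ℝ g) x) x :=
    (hcder.smul hdf').add hdg'
  have h2 : fderiv ℝ (fderiv ℝ (fun z => (k + f z) ^ d + g z)) x
      = (d * w ^ (d - 1)) • fderiv ℝ (fderiv ℝ f) x
        + ((d * ((d - 1) * w ^ (d - 1 - 1))) • fderiv ℝ f x).smulRight (fderiv ℝ f x)
        + fderiv ℝ (fderiv ℝ g) x := by
    rw [hev.fderiv_eq]; exact hΦ.fderiv
  rw [plap_eq_sum, plap_eq_sum, plap_eq_sum, h2]
  set S1 := ∑ i : Fin N,
    fderiv ℝ (fderiv ℝ f) x (EuclideanSpace.single i 1) (EuclideanSpace.single i 1) with hS1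
  set S2 := ∑ i : Fin N, fderiv ℝ f x (EuclideanSpace.single i 1) *
    fderiv ℝ f x (EuclideanSpace.single i 1) with hS2
  set S3 := ∑ i : Fin N,
    fderiv ℝ (fderiv ℝ g) x (EuclideanSpace.single i 1) (EuclideanSpace.single i 1) with hS3
  have hexp : (∑ i : Fin N,
      ((d * w ^ (d - 1)) • fderiv ℝ (fderiv ℝ f) x
        + ((d * ((d - 1) * w ^ (d - 1 - 1))) • fderiv ℝ f x).smulRight (fderiv ℝ f x)
        + fderiv ℝ (fderiv ℝ g) x) (EuclideanSpace.single i 1) (EuclideanSpace.single i 1))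
      = d * w ^ (d - 1) * S1 + d * ((d - 1) * w ^ (d - 1 - 1)) * S2 + S3 := by
    rw [hS1, hS2, hS3, Finset.mul_sum, Finset.mul_sum, ← Finset.sum_add_distrib,
      ← Finset.sum_add_distrib]
    refine Finset.sum_congr rfl fun i _ => ?_
    simp only [ContinuousLinearMap.add_apply, ContinuousLinearMap.smul_apply,
      ContinuousLinearMap.smulRight_apply, smul_eq_mul]
    ring
  rw [hexp]
  have hS2nn : 0 ≤ d * ((d - 1) * w ^ (d - 1 - 1)) * S2 := by
    have h1 : 0 < w ^ (d - 1 - 1) := Real.rpow_pos_of_pos hw0 _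
    have h2 : 0 ≤ S2 := Finset.sum_nonneg fun i _ => mul_self_nonneg _
    have : 0 ≤ d * ((d - 1) * w ^ (d - 1 - 1)) :=
      mul_nonneg (by linarith) (mul_nonneg (by linarith) h1.le)
    exact mul_nonneg this h2
  linarith

theorem stmt6 {N : ℕ} (hN : 1 ≤ N) (Ω : Set (EuclideanSpace ℝ (Fin N)))
    (hΩ : IsOpen Ω) (hΩne : Ω.Nonempty) (p q : ℝ) (hp : 1 < p) (hpq : p < q)
    (T : ℝ≥0∞) (hT : 0 < T) (u v : EuclideanSpace ℝ (Fin N) → ℝ → ℝ)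
    (hsol : IsPosSol Ω T p q u v)
    (d c k : ℝ) (F : EuclideanSpace ℝ (Fin N) → ℝ → ℝ)
    (hd : d = (q + 1) / (p + 1))
    (hc : c = 2 ^ (1 - p) * min d (2 ^ (1 - q)))
    (hk : k = c ^ (-(1 / (d - 1))))
    (hF : F = fun x t => (k + u x t) ^ d + v x t) :
    ∀ x ∈ Ω, ∀ t ∈ timeIoo T,
      deriv (fun s => F x s) t - plap (fun y => F y t) x +
          c * (k + u x t) ^ (d - 1) * F x t ^ p ≤ k ^ q ∧
      deriv (fun s => F x s) t - plap (fun y => F y t) x + F x t ^ p ≤ k ^ q := by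
  subst hF
  have hto : IsOpen (timeIoo T) := by
    have : timeIoo T = Ioi (0:ℝ) ∩ (ENNReal.ofReal ⁻¹' Iio T) := rfl
    rw [this]
    exact isOpen_Ioi.inter (isOpen_Iio.preimage ENNReal.continuous_ofReal)
  intro x hx t ht
  have hU : 0 < u x t := hsol.upos x hx t ht
  have hV : 0 < v x t := hsol.vpos x hx t ht
  -- basic constants
  have hp1 : (0:ℝ) < p + 1 := by linarith
  have hd1 : 1 < d := by rw [hd, lt_div_iff₀ hp1]; linarith
  have h2q : (0:ℝ) < 2 ^ (1 - q) := Real.rpow_pos_of_pos two_pos _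
  have h2p : (0:ℝ) < 2 ^ (1 - p) := Real.rpow_pos_of_pos two_pos _
  have hc0 : 0 < c := by rw [hc]; exact mul_pos h2p (lt_min (by linarith) h2q)
  have hk0 : 0 < k := hk ▸ Real.rpow_pos_of_pos hc0 _
  set w := k + u x t with hw
  have hw0 : 0 < w := by positivity
  -- time derivative
  have hut : DifferentiableAt ℝ (fun s => u x s) t :=
    ((hsol.utreg x hx).contDiffAt (hto.mem_nhds ht)).differentiableAt one_ne_zero
  have hvt : DifferentiableAt ℝ (fun s => v x s) t :=
    ((hsol.vtreg x hx).contDiffAt (hto.mem_nhds ht)).differentiableAt one_ne_zero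
  have hφ : HasDerivAt (fun s => (k + u x s) ^ d)
      (d * w ^ (d - 1) * deriv (fun s => u x s) t) t := by
    have hinner : HasDerivAt (fun s => k + u x s) (deriv (fun s => u x s) t) t :=
      hut.hasDerivAt.const_add k
    have houter : HasDerivAt (fun s : ℝ => s ^ d) (d * w ^ (d - 1)) w :=
      Real.hasDerivAt_rpow_const (Or.inl hw0.ne')
    exact HasDerivAt.comp t houter hinner
  have hFt : deriv (fun s => (k + u x s) ^ d + v x s) t
      = d * w ^ (d - 1) * deriv (fun s => u x s) t + deriv (fun s => v x s) t :=
    (hφ.add hvt.hasDerivAt).deriv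
  -- space Laplacian lower bound
  have hplap : d * w ^ (d - 1) * plap (fun y => u y t) x + plap (fun y => v y t) x
      ≤ plap (fun y => (k + u y t) ^ d + v y t) x :=
    plap_lower hΩ hx (hsol.uxreg t ht) (hsol.vxreg t ht) hd1
      (fun y hy => by have := hsol.upos y hy t ht; positivity)
  -- the PDEs
  have hueq := hsol.ueq x hx t ht
  have hveq := hsol.veq x hx t ht
  -- algebraic inequality
  obtain ⟨halg1, halg2⟩ := alg_core hp hpq hd hc hk hU hV
  rw [← hw] at halg1 halg2
  have hwd : 0 < w ^ (d - 1) := Real.rpow_pos_of_pos hw0 _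
  have hstep1 : deriv (fun s => (k + u x s) ^ d + v x s) t
      - plap (fun y => (k + u y t) ^ d + v y t) x
      + c * w ^ (d - 1) * ((k + u x t) ^ d + v x t) ^ p ≤ k ^ q := by
    rw [hFt]
    have e1 : deriv (fun s => u x s) t - plap (fun y => u y t) x = - v x t ^ p := by
      linarith
    have e2 : deriv (fun s => v x s) t - plap (fun y => v y t) x = - u x t ^ q := by
      linarith
    have hmain : d * w ^ (d - 1) * deriv (fun s => u x s) t + deriv (fun s => v x s) t
        - (d * w ^ (d - 1) * plap (fun y => u y t) x + plap (fun y => v y t) x)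
        = - (d * w ^ (d - 1) * v x t ^ p) - u x t ^ q := by
      calc d * w ^ (d - 1) * deriv (fun s => u x s) t + deriv (fun s => v x s) t
          - (d * w ^ (d - 1) * plap (fun y => u y t) x + plap (fun y => v y t) x)
          = d * w ^ (d - 1) * (deriv (fun s => u x s) t - plap (fun y => u y t) x)
            + (deriv (fun s => v x s) t - plap (fun y => v y t) x) := by ring
        _ = d * w ^ (d - 1) * (- v x t ^ p) + (- u x t ^ q) := by rw [e1, e2]
        _ = - (d * w ^ (d - 1) * v x t ^ p) - u x t ^ q := by ring
    linarith [hplap, halg1, hmain]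
  refine ⟨hstep1, ?_⟩
  have hF0 : (0:ℝ) < ((k + u x t) ^ d + v x t) ^ p := by
    have : (0:ℝ) < (k + u x t) ^ d + v x t := by
      have := Real.rpow_pos_of_pos hw0 d; positivity
    exact Real.rpow_pos_of_pos this _
  linarith [hstep1, halg2]
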